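/- Fix 0 < n < m, covariates x_1, …, x_m ∈ ℝ^k, and |A| > 0. For every β ∈ ℝ^{k+1}, the Hessian matrix of the function γ ↦ l_ppm(γ − J_m; 1) (all weights 1) evaluated at γ = β + J_{|A|} equals the Hessian matrix of the function β ↦ l_ppm(β; (|A|/m)·1) (all weights |A|/m) evaluated at β. Consequently, the Fisher information matrices (negative Hessians) of the unit-weight model at its maximizer γ̂ = β̂ + J_{|A|} and of the equally-weighted model at its maximizer β̂ are equal, so the two fits yield identical standard errors. -/

import Mathlib

open Real Finset Filter

noncomputable section

/-- The intensity `λ_i(β) = exp(β_0 + Σ_{j=1}^k x_{ij} β_j)`. -/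
def lam {k : ℕ} (x : ℕ → Fin k → ℝ) (β : Fin (k + 1) → ℝ) (i : ℕ) : ℝ :=
  Real.exp (β 0 + ∑ j : Fin k, x i j * β j.succ)

/-- The weighted Poisson point-process log-likelihood
`l_ppm(β; w) = Σ_{i=1}^n log λ_i(β) − Σ_{i=1}^m w_i λ_i(β)`
(points are indexed `0, …, m-1`, the presences being `0, …, n-1`). -/
def lppm {k : ℕ} (n m : ℕ) (x : ℕ → Fin k → ℝ) (w : ℕ → ℝ) (β : Fin (k + 1) → ℝ) : ℝ :=
  (∑ i ∈ Finset.range n, Real.log (lam x β i)) - ∑ i ∈ Finset.range m, w i * lam x β i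

/-- The vector `J_c = (log c, 0, …, 0) ∈ ℝ^{k+1}`. -/
def Jvec {k : ℕ} (c : ℝ) : Fin (k + 1) → ℝ := fun j => if j = 0 then Real.log c else 0

section Aux

variable {E F : Type*} [NormedAddCommGroup E] [NormedSpace ℝ E]
  [NormedAddCommGroup F] [NormedSpace ℝ F]

lemma my_fderiv_comp_add_right (f : E → F) (v x : E) :
    fderiv ℝ (fun y => f (y + v)) x = fderiv ℝ f (x + v) := by
  by_cases h : DifferentiableAt ℝ f (x + v)
  · have h1 : HasFDerivAt (fun y : E => y + v) (ContinuousLinearMap.id ℝ E) x :=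
      (hasFDerivAt_id x).add_const v
    have h2 := (h.hasFDerivAt.comp x h1)
    simpa [Function.comp_def] using h2.fderiv
  · rw [fderiv_zero_of_not_differentiableAt h, fderiv_zero_of_not_differentiableAt]
    intro hcontra
    apply h
    have h2 : DifferentiableAt ℝ ((fun y => f (y + v)) ∘ (fun z : E => z - v)) (x + v) := by
      apply DifferentiableAt.comp
      · simpa using hcontra
      · exact (differentiable_id.sub_const v).differentiableAt
    simpa [Function.comp_def, sub_add_cancel] using h2

lemma my_iteratedFDeriv_comp_add_right (n : ℕ) (f : E → F) (v : E) :
    iteratedFDeriv ℝ n (fun y => f (y + v)) = fun x => iteratedFDeriv ℝ n f (x + v) := by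
  induction n with
  | zero =>
    funext x; ext mm; simp [iteratedFDeriv_zero_apply]
  | succ n ih =>
    funext x
    rw [iteratedFDeriv_succ_eq_comp_left, iteratedFDeriv_succ_eq_comp_left]
    simp only [Function.comp_apply]
    congr 1
    rw [ih]
    exact my_fderiv_comp_add_right _ v x

lemma my_iteratedFDeriv_two_add_const (h : E → ℝ) (c : ℝ) :
    iteratedFDeriv ℝ 2 (fun y => h y + c) = iteratedFDeriv ℝ 2 h := by
  funext x
  rw [show (2 : ℕ) = 1 + 1 from rfl, iteratedFDeriv_succ_eq_comp_right,
    iteratedFDeriv_succ_eq_comp_right]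
  simp only [Function.comp_apply]
  have hd : (fun y => fderiv ℝ (fun z => h z + c) y) = fun y => fderiv ℝ h y :=
    funext fun y => fderiv_add_const c
  rw [hd]

end Aux

lemma lam_sub_Jvec {k : ℕ} (x : ℕ → Fin k → ℝ) (β : Fin (k + 1) → ℝ) (c : ℝ) (hc : 0 < c)
    (i : ℕ) : lam x (β - Jvec c) i = lam x β i / c := by
  simp only [lam, Pi.sub_apply]
  have hsum : ∑ j : Fin k, x i j * (β j.succ - Jvec c j.succ)
      = ∑ j : Fin k, x i j * β j.succ := by
    refine Finset.sum_congr rfl fun j _ => ?_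
    simp [Jvec, Fin.succ_ne_zero]
  have h0 : (Jvec (k := k) c) 0 = Real.log c := by simp [Jvec]
  rw [hsum, h0, sub_add_eq_add_sub, Real.exp_sub, Real.exp_log hc]

/-- For every `β`, the Hessian of the unit-weight likelihood `γ ↦ l_ppm(γ − J_m; 1)`
evaluated at `γ = β + J_{|A|}` equals the Hessian of the equally-weighted likelihood
`β ↦ l_ppm(β; (|A|/m)·1)` evaluated at `β`.  Consequently the Fisher information
matrices (negative Hessians) of the two fits at their respective maximizers are
equal, so they yield identical standard errors. -/
theorem stmt_2 {k : ℕ} (n m : ℕ) (hn : 0 < n) (hnm : n < m)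
    (x : ℕ → Fin k → ℝ) (A : ℝ) (hA : 0 < A) (β : Fin (k + 1) → ℝ) :
    iteratedFDeriv ℝ 2 (fun γ : Fin (k + 1) → ℝ => lppm n m x (fun _ => 1) (γ - Jvec (m : ℝ)))
        (β + Jvec A) =
      iteratedFDeriv ℝ 2 (fun β' : Fin (k + 1) → ℝ => lppm n m x (fun _ => A / m) β') β := by
  have hm : (0 : ℝ) < (m : ℝ) := by exact_mod_cast hn.trans hnm
  have hlogsum : ∀ (γ : Fin (k + 1) → ℝ) (c : ℝ), 0 < c →
      ∑ i ∈ Finset.range n, Real.log (lam x γ i / c)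
        = (∑ i ∈ Finset.range n, Real.log (lam x γ i)) - n * Real.log c := by
    intro γ c hc
    have h : ∀ i ∈ Finset.range n, Real.log (lam x γ i / c)
        = Real.log (lam x γ i) - Real.log c :=
      fun i _ => Real.log_div (Real.exp_ne_zero _) (ne_of_gt hc)
    rw [Finset.sum_congr rfl h,
      Finset.sum_sub_distrib, Finset.sum_const, Finset.card_range, nsmul_eq_mul]
  have hfun : (fun γ : Fin (k + 1) → ℝ => lppm n m x (fun _ => 1) (γ - Jvec (m : ℝ)))
      = fun γ => lppm n m x (fun _ => A / m) (γ + -(Jvec A))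
          + ((n : ℝ) * Real.log A - (n : ℝ) * Real.log (m : ℝ)) := by
    funext γ
    have h1 : ∀ i, lam x (γ - Jvec (m : ℝ)) i = lam x γ i / m :=
      lam_sub_Jvec x γ _ hm
    have h2 : ∀ i, lam x (γ + -(Jvec A)) i = lam x γ i / A := by
      intro i
      rw [show γ + -(Jvec A) = γ - Jvec A from (sub_eq_add_neg γ (Jvec A)).symm]
      exact lam_sub_Jvec x γ _ hA i
    simp only [lppm, h1, h2, one_mul]
    rw [hlogsum γ _ hm, hlogsum γ _ hA]
    have h3 : ∀ i ∈ Finset.range m, A / (m : ℝ) * (lam x γ i / A) = lam x γ i / m := by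
      intro i _
      field_simp
    rw [Finset.sum_congr rfl h3]
    ring
  rw [hfun, my_iteratedFDeriv_two_add_const,
    my_iteratedFDeriv_comp_add_right 2 (lppm n m x fun _ => A / m) (-(Jvec A))]
  simp only []
  have hb : β + Jvec A + -(Jvec A) = β := by abel
  rw [hb]
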